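/- Let f, g : [0,∞) → [0,∞) be continuous with f C¹, f(0) = 0, and f'(τ) + g(τ) ≤ a(1+bτ)^{-1} f(τ) + c(1+bτ)^{-1} for positive constants a, b, c. Then (1+bτ)^{-a/b} f(τ) + ∫₀^τ (1+bs)^{-a/b} g(s) ds ≤ (c/a)·(1 - (1+bτ)^{-a/b}) ≤ c/a for all τ ≥ 0. -/

import Mathlib

theorem stmt12 (a b c : ℝ) (ha : 0 < a) (hb : 0 < b) (hc : 0 < c)
    (f g f' : ℝ → ℝ)
    (hf : ∀ τ, 0 ≤ τ → 0 ≤ f τ) (hg : ∀ τ, 0 ≤ τ → 0 ≤ g τ)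
    (hgc : ContinuousOn g (Set.Ici 0))
    (hderiv : ∀ τ, 0 ≤ τ → HasDerivAt f (f' τ) τ)
    (hf'c : ContinuousOn f' (Set.Ici 0))
    (hf0 : f 0 = 0)
    (hineq : ∀ τ, 0 ≤ τ →
      f' τ + g τ ≤ a * (1 + b * τ)⁻¹ * f τ + c * (1 + b * τ)⁻¹) :
    ∀ τ, 0 ≤ τ →
      (1 + b * τ) ^ (-(a / b)) * f τ +
          ∫ s in (0:ℝ)..τ, (1 + b * s) ^ (-(a / b)) * g s ≤
        (c / a) * (1 - (1 + b * τ) ^ (-(a / b))) ∧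
      (c / a) * (1 - (1 + b * τ) ^ (-(a / b))) ≤ c / a := by
  set p : ℝ := -(a / b) with hp
  have hpb : p * b = -a := by
    rw [hp, neg_mul, div_mul_cancel₀ a hb.ne']
  -- positivity of base
  have hpos : ∀ s : ℝ, 0 ≤ s → (0:ℝ) < 1 + b * s := fun s hs => by positivity
  -- derivative of h s = (1+b*s)^p
  have hderivh : ∀ s : ℝ, 0 ≤ s →
      HasDerivAt (fun t => (1 + b * t) ^ p) (-a * (1 + b * s) ^ (p - 1)) s := by
    intro s hs
    have h1 : HasDerivAt (fun t : ℝ => 1 + b * t) b s := by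
      simpa using ((hasDerivAt_id s).const_mul b).const_add 1
    have h2 := h1.rpow_const (p := p) (Or.inl (hpos s hs).ne')
    convert h2 using 1; rw [← hpb]; ring
  -- continuity of f on Ici 0
  have hfc : ContinuousOn f (Set.Ici 0) := fun s hs =>
    ((hderiv s hs).continuousAt).continuousWithinAt
  have hhc : ContinuousOn (fun s : ℝ => (1 + b * s) ^ p) (Set.Ici 0) := by
    apply ContinuousOn.rpow_const
    · exact (continuous_const.add (continuous_const.mul continuous_id)).continuousOn
    · intro s hs; exact Or.inl (hpos s hs).ne'
  have hhc' : ContinuousOn (fun s : ℝ => (1 + b * s) ^ (p - 1)) (Set.Ici 0) := by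
    apply ContinuousOn.rpow_const
    · exact (continuous_const.add (continuous_const.mul continuous_id)).continuousOn
    · intro s hs; exact Or.inl (hpos s hs).ne'
  intro τ hτ
  have huIcc : Set.uIcc (0:ℝ) τ = Set.Icc 0 τ := Set.uIcc_of_le hτ
  have hsub : Set.Icc (0:ℝ) τ ⊆ Set.Ici 0 := fun x hx => hx.1
  -- φ and its derivative
  set φ : ℝ → ℝ := fun s => (1 + b * s) ^ p * f s + (c / a) * (1 + b * s) ^ p with hφ
  set φ' : ℝ → ℝ := fun s =>
    (-a * (1 + b * s) ^ (p - 1)) * f s + (1 + b * s) ^ p * f' s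
      + (c / a) * (-a * (1 + b * s) ^ (p - 1)) with hφ'
  have hderivφ : ∀ s ∈ Set.uIcc (0:ℝ) τ, HasDerivAt φ (φ' s) s := by
    intro s hs
    rw [huIcc] at hs
    have hs0 : 0 ≤ s := hs.1
    exact ((hderivh s hs0).mul (hderiv s hs0)).add ((hderivh s hs0).const_mul (c / a))
  have hφ'c : ContinuousOn φ' (Set.Icc 0 τ) := by
    have h1 := (hhc'.mono hsub)
    have h2 := (hhc.mono hsub)
    have h3 := (hfc.mono hsub)
    have h4 := (hf'c.mono hsub)
    exact (((continuousOn_const.mul h1).mul h3).add (h2.mul h4)).add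
      (continuousOn_const.mul (continuousOn_const.mul h1))
  have hφ'int : IntervalIntegrable φ' MeasureTheory.volume 0 τ :=
    (huIcc ▸ hφ'c).intervalIntegrable
  have hhgc : ContinuousOn (fun s : ℝ => -((1 + b * s) ^ p * g s)) (Set.Icc 0 τ) :=
    ((hhc.mono hsub).mul (hgc.mono hsub)).neg
  have hhgint : IntervalIntegrable (fun s : ℝ => -((1 + b * s) ^ p * g s))
      MeasureTheory.volume 0 τ := (huIcc ▸ hhgc).intervalIntegrable
  have hFTC : ∫ s in (0:ℝ)..τ, φ' s = φ τ - φ 0 :=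
    intervalIntegral.integral_eq_sub_of_hasDerivAt hderivφ hφ'int
  have hptwise : ∀ s ∈ Set.Icc (0:ℝ) τ, φ' s ≤ -((1 + b * s) ^ p * g s) := by
    intro s hs
    have hs0 : 0 ≤ s := hs.1
    have hbs := hpos s hs0
    have hw1 : (1 + b * s) ^ (p - 1) = (1 + b * s) ^ p * (1 + b * s)⁻¹ := by
      rw [Real.rpow_sub hbs, Real.rpow_one, div_eq_mul_inv]
    have hwnn : (0:ℝ) ≤ (1 + b * s) ^ p := Real.rpow_nonneg hbs.le p
    have hmul := mul_le_mul_of_nonneg_left (hineq s hs0) hwnn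
    have hca : (c / a) * a = c := div_mul_cancel₀ c ha.ne'
    simp only [hφ']
    rw [hw1]
    have key : c / a * (-a * ((1 + b * s) ^ p * (1 + b * s)⁻¹))
        = -(c * ((1 + b * s) ^ p * (1 + b * s)⁻¹)) := by
      field_simp
    rw [key]
    nlinarith [hmul]
  have hmono := intervalIntegral.integral_mono_on hτ hφ'int hhgint hptwise
  rw [hFTC, intervalIntegral.integral_neg] at hmono
  have hφ0 : φ 0 = c / a := by simp [hφ, hf0]
  have hwτ : (0:ℝ) ≤ (1 + b * τ) ^ p := Real.rpow_nonneg (hpos τ hτ).le p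
  constructor
  · have : φ τ = (1 + b * τ) ^ p * f τ + (c / a) * (1 + b * τ) ^ p := rfl
    rw [this, hφ0] at hmono
    linarith
  · have hca : 0 ≤ c / a := (div_pos hc ha).le
    nlinarith
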